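/- (Mutualism theorem.) In the AI regulation game with quadratic costs, suppose both players' cost matrices satisfy the two-sided investment condition |c_pab| < min(√(c_paa·c_pbb), c_paa·rβ/rα, c_pbb·rα/rβ) for p ∈ {0,1}. Let γ0^A := (δ/2)·C0⁻¹·r and γ1^A := γ0^A + ((1−δ)/2)·C1⁻¹·r with β-coordinates β0^A and β1^A. Then there exists ε > 0 such that the regulatory regime θG = β0^A + ε, θD = β1^A + 2ε mutually improves both players' utilities: every subgame perfect equilibrium (b, γ0*) under regulation (β0^A + ε, β1^A + 2ε) satisfies U_G(γ0*, b(γ0*)) > U_G(γ0^A, γ1^A) and U_D(γ0*, b(γ0*)) > U_D(γ0^A, γ1^A). -/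

import Mathlib

open Matrix

/-- The domain specialist's utility
`U_D(γ0, γ1) = (1−δ)·(rα·α1 + rβ·β1) − (γ1−γ0)ᵀ C1 (γ1−γ0)`. -/
noncomputable def UD (c1aa c1ab c1bb rα rβ δ : ℝ) (γ0 γ1 : Fin 2 → ℝ) : ℝ :=
  (1 - δ) * (rα * γ1 0 + rβ * γ1 1)
    - (γ1 - γ0) ⬝ᵥ ((!![c1aa, c1ab; c1ab, c1bb] : Matrix (Fin 2) (Fin 2) ℝ) *ᵥ (γ1 - γ0))

/-- The generalist's utility `U_G(γ0, γ1) = δ·(rα·α1 + rβ·β1) − γ0ᵀ C0 γ0`. -/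
noncomputable def UG (c0aa c0ab c0bb rα rβ δ : ℝ) (γ0 γ1 : Fin 2 → ℝ) : ℝ :=
  δ * (rα * γ1 0 + rβ * γ1 1)
    - γ0 ⬝ᵥ ((!![c0aa, c0ab; c0ab, c0bb] : Matrix (Fin 2) (Fin 2) ℝ) *ᵥ γ0)

/-- Subgame perfect equilibrium under regulation `(θG, θD)`: `b` maps each generalist
strategy to a specialist best response over the regulated feasible set
`F(γ0, θD) = {(α, β) : α ≥ α0, β ≥ max(β0, θD)}`, and `γ0s` maximizes the generalist's
utility over her regulated strategies `{(α, β) : α ≥ 0, β ≥ θG}`. -/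
def IsSPE (c0aa c0ab c0bb c1aa c1ab c1bb rα rβ δ θG θD : ℝ)
    (b : (Fin 2 → ℝ) → (Fin 2 → ℝ)) (γ0s : Fin 2 → ℝ) : Prop :=
  (∀ γ0 : Fin 2 → ℝ,
      (γ0 0 ≤ (b γ0) 0 ∧ max (γ0 1) θD ≤ (b γ0) 1) ∧
      ∀ γ : Fin 2 → ℝ, γ0 0 ≤ γ 0 → max (γ0 1) θD ≤ γ 1 →
        UD c1aa c1ab c1bb rα rβ δ γ0 γ ≤ UD c1aa c1ab c1bb rα rβ δ γ0 (b γ0)) ∧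
  0 ≤ γ0s 0 ∧ θG ≤ γ0s 1 ∧
  ∀ γ0 : Fin 2 → ℝ, 0 ≤ γ0 0 → θG ≤ γ0 1 →
    UG c0aa c0ab c0bb rα rβ δ γ0 (b γ0) ≤ UG c0aa c0ab c0bb rα rβ δ γ0s (b γ0s)

/-- The no-regulation equilibrium strategy of the generalist: `γ0^A = (δ/2)·C0⁻¹·r`. -/
noncomputable def gamma0A (c0aa c0ab c0bb rα rβ δ : ℝ) : Fin 2 → ℝ :=
  (δ / 2) • ((!![c0aa, c0ab; c0ab, c0bb] : Matrix (Fin 2) (Fin 2) ℝ)⁻¹ *ᵥ ![rα, rβ])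

/-- The no-regulation equilibrium outcome: `γ1^A = γ0^A + ((1−δ)/2)·C1⁻¹·r`. -/
noncomputable def gamma1A (c0aa c0ab c0bb c1aa c1ab c1bb rα rβ δ : ℝ) : Fin 2 → ℝ :=
  gamma0A c0aa c0ab c0bb rα rβ δ +
    ((1 - δ) / 2) • ((!![c1aa, c1ab; c1ab, c1bb] : Matrix (Fin 2) (Fin 2) ℝ)⁻¹ *ᵥ ![rα, rβ])

/-- The paper's (one-sided) investment condition on a cost matrix
`!![caa, cab; cab, cbb]`. -/
def InvCond (caa cab cbb rα rβ : ℝ) : Prop :=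
  cab < min (Real.sqrt (caa * cbb)) (min (caa * rβ / rα) (cbb * rα / rβ))

/-- The paper's two-sided investment condition on a cost matrix
`!![caa, cab; cab, cbb]`. -/
def InvCond2 (caa cab cbb rα rβ : ℝ) : Prop :=
  |cab| < min (Real.sqrt (caa * cbb)) (min (caa * rβ / rα) (cbb * rα / rβ))

lemma ud_eval (c1aa c1ab c1bb rα rβ δ : ℝ) (γ0 γ1 : Fin 2 → ℝ) :
    UD c1aa c1ab c1bb rα rβ δ γ0 γ1 =
      (1 - δ) * (rα * γ1 0 + rβ * γ1 1)
        - (c1aa * (γ1 0 - γ0 0) ^ 2 + 2 * c1ab * (γ1 0 - γ0 0) * (γ1 1 - γ0 1)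
            + c1bb * (γ1 1 - γ0 1) ^ 2) := by
  simp [UD, Matrix.mulVec, dotProduct, Fin.sum_univ_two]
  ring

lemma ug_eval (c0aa c0ab c0bb rα rβ δ : ℝ) (γ0 γ1 : Fin 2 → ℝ) :
    UG c0aa c0ab c0bb rα rβ δ γ0 γ1 =
      δ * (rα * γ1 0 + rβ * γ1 1)
        - (c0aa * (γ0 0) ^ 2 + 2 * c0ab * (γ0 0) * (γ0 1) + c0bb * (γ0 1) ^ 2) := by
  simp [UG, Matrix.mulVec, dotProduct, Fin.sum_univ_two]
  ring

lemma br_char (c1aa c1ab c1bb rα rβ δ : ℝ)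
    (hc1aa : 0 < c1aa) (hdet : 0 < c1aa * c1bb - c1ab ^ 2)
    (dα dβ : ℝ)
    (e1 : 2 * (c1aa * dα + c1ab * dβ) = (1 - δ) * rα)
    (e2 : 2 * (c1ab * dα + c1bb * dβ) = (1 - δ) * rβ)
    (γ0 : Fin 2 → ℝ) (θD s x : ℝ)
    (hs : 0 ≤ s) (hx : c1aa * x = c1aa * dα - c1ab * s)
    (hkkt : s = 0 ∨ θD = γ0 1 + dβ + s)
    (γ : Fin 2 → ℝ) (hγ0 : γ0 0 ≤ γ 0) (hγ1 : max (γ0 1) θD ≤ γ 1) :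
    UD c1aa c1ab c1bb rα rβ δ γ0 γ ≤
      UD c1aa c1ab c1bb rα rβ δ γ0 ![γ0 0 + x, γ0 1 + dβ + s] ∧
    (UD c1aa c1ab c1bb rα rβ δ γ0 γ =
      UD c1aa c1ab c1bb rα rβ δ γ0 ![γ0 0 + x, γ0 1 + dβ + s] →
      γ = ![γ0 0 + x, γ0 1 + dβ + s]) := by
  have key : c1aa * (UD c1aa c1ab c1bb rα rβ δ γ0 ![γ0 0 + x, γ0 1 + dβ + s]
        - UD c1aa c1ab c1bb rα rβ δ γ0 γ)
      = (c1aa * (γ 0 - (γ0 0 + x)) + c1ab * (γ 1 - (γ0 1 + dβ + s))) ^ 2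
        + (c1aa * c1bb - c1ab ^ 2) * (γ 1 - (γ0 1 + dβ + s)) ^ 2
        + 2 * (c1aa * c1bb - c1ab ^ 2) * (s * (γ 1 - (γ0 1 + dβ + s))) := by
    rw [ud_eval, ud_eval]
    simp only [Matrix.cons_val_zero, Matrix.cons_val_one, Matrix.head_cons]
    linear_combination (c1aa * (γ 0 - γ0 0 - x)) * e1 + (c1aa * (γ 1 - γ0 1 - dβ - s)) * e2
      + (2 * c1aa * (γ 0 - γ0 0 - x) + 2 * c1ab * (γ 1 - γ0 1 - dβ - s)) * hx
  set u := γ 0 - (γ0 0 + x) with hu_def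
  set v := γ 1 - (γ0 1 + dβ + s) with hv_def
  set D := c1aa * c1bb - c1ab ^ 2 with hD_def
  have hsv : 0 ≤ s * v := by
    rcases hkkt with h | h
    · simp [h]
    · have h1 : θD ≤ γ 1 := le_trans (le_max_right _ _) hγ1
      have : 0 ≤ v := by rw [hv_def, ← h]; linarith
      exact mul_nonneg hs this
  have hterm := mul_nonneg hdet.le hsv
  have hsq := sq_nonneg (c1aa * u + c1ab * v)
  constructor
  · nlinarith [key, hsq, sq_nonneg v, hterm, hdet, hc1aa]
  · intro heq
    have hz : (0:ℝ) = (c1aa * u + c1ab * v) ^ 2 + D * v ^ 2 + 2 * D * (s * v) := by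
      rw [← key, heq]; ring
    have hv2 : v ^ 2 ≤ 0 := by nlinarith [hz, hsq, hterm, hdet]
    have hv : v = 0 := by
      have h0 : v ^ 2 = 0 := le_antisymm hv2 (sq_nonneg v)
      exact pow_eq_zero_iff (by norm_num) |>.mp h0
    have hu : u = 0 := by
      have h0 : (c1aa * u) ^ 2 = 0 := by rw [hv] at hz; linear_combination -hz
      have h1 := pow_eq_zero_iff (n := 2) (by norm_num) |>.mp h0
      rcases mul_eq_zero.mp h1 with h | h
      · exact absurd h (ne_of_gt hc1aa)
      · exact h
    have hu' : γ 0 = γ0 0 + x := by rw [hu_def] at hu; linarith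
    have hv' : γ 1 = γ0 1 + dβ + s := by rw [hv_def] at hv; linarith
    funext i
    fin_cases i <;> simpa

lemma br_eq (c1aa c1ab c1bb rα rβ δ : ℝ)
    (hc1aa : 0 < c1aa) (hdet : 0 < c1aa * c1bb - c1ab ^ 2)
    (dα dβ : ℝ)
    (e1 : 2 * (c1aa * dα + c1ab * dβ) = (1 - δ) * rα)
    (e2 : 2 * (c1ab * dα + c1bb * dβ) = (1 - δ) * rβ)
    (γ0 : Fin 2 → ℝ) (θD s x : ℝ)
    (hs : 0 ≤ s) (hx : c1aa * x = c1aa * dα - c1ab * s) (hx0 : 0 ≤ x)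
    (hdβs : 0 ≤ dβ + s)
    (hkkt : s = 0 ∨ θD = γ0 1 + dβ + s)
    (hθ : θD ≤ γ0 1 + dβ + s)
    (b : (Fin 2 → ℝ) → (Fin 2 → ℝ))
    (hbf : γ0 0 ≤ b γ0 0 ∧ max (γ0 1) θD ≤ b γ0 1)
    (hbo : ∀ γ : Fin 2 → ℝ, γ0 0 ≤ γ 0 → max (γ0 1) θD ≤ γ 1 →
      UD c1aa c1ab c1bb rα rβ δ γ0 γ ≤ UD c1aa c1ab c1bb rα rβ δ γ0 (b γ0)) :
    b γ0 = ![γ0 0 + x, γ0 1 + dβ + s] := by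
  have hf0 : γ0 0 ≤ (![γ0 0 + x, γ0 1 + dβ + s] : Fin 2 → ℝ) 0 := by simp; linarith
  have hf1 : max (γ0 1) θD ≤ (![γ0 0 + x, γ0 1 + dβ + s] : Fin 2 → ℝ) 1 := by
    simp only [Matrix.cons_val_one, Matrix.head_cons, Matrix.cons_val_zero]
    exact max_le (by linarith) hθ
  have h1 := hbo _ hf0 hf1
  have h2 := br_char c1aa c1ab c1bb rα rβ δ hc1aa hdet dα dβ e1 e2 γ0 θD s x hs hx hkkt
    (b γ0) hbf.1 hbf.2
  exact h2.2 (le_antisymm h2.1 h1)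

lemma cancel_pos_factor (a b c : ℝ) (hc : 0 < c) (h : 0 < c * (b - a)) : a < b := by nlinarith

lemma pos_cancel (c x : ℝ) (hc : 0 < c) (h : 0 < c * x) : 0 < x := by nlinarith

set_option maxHeartbeats 2000000 in
/-- **Mutualism theorem.** Under the two-sided investment condition on both cost
matrices, there exists `ε > 0` such that the regulatory regime
`θG = β0^A + ε, θD = β1^A + 2ε` mutually improves both players' utilities in every
subgame perfect equilibrium, compared to the no-regulation outcome. -/
theorem mutualism
    (c0aa c0bb c0ab c1aa c1bb c1ab rα rβ δ : ℝ)
    (hc0aa : 0 < c0aa) (hc0bb : 0 < c0bb) (hc1aa : 0 < c1aa) (hc1bb : 0 < c1bb)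
    (hrα : 0 < rα) (hrβ : 0 < rβ) (hδ0 : 0 < δ) (hδ1 : δ < 1)
    (hcond0 : InvCond2 c0aa c0ab c0bb rα rβ)
    (hcond1 : InvCond2 c1aa c1ab c1bb rα rβ) :
    ∃ ε : ℝ, 0 < ε ∧
      ∀ (b : (Fin 2 → ℝ) → (Fin 2 → ℝ)) (γ0s : Fin 2 → ℝ),
        IsSPE c0aa c0ab c0bb c1aa c1ab c1bb rα rβ δ
          (gamma0A c0aa c0ab c0bb rα rβ δ 1 + ε)
          (gamma1A c0aa c0ab c0bb c1aa c1ab c1bb rα rβ δ 1 + 2 * ε) b γ0s →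
        UG c0aa c0ab c0bb rα rβ δ (gamma0A c0aa c0ab c0bb rα rβ δ)
            (gamma1A c0aa c0ab c0bb c1aa c1ab c1bb rα rβ δ) <
          UG c0aa c0ab c0bb rα rβ δ γ0s (b γ0s) ∧
        UD c1aa c1ab c1bb rα rβ δ (gamma0A c0aa c0ab c0bb rα rβ δ)
            (gamma1A c0aa c0ab c0bb c1aa c1ab c1bb rα rβ δ) <
          UD c1aa c1ab c1bb rα rβ δ γ0s (b γ0s) := by
  simp only [InvCond2, lt_min_iff] at hcond0 hcond1
  obtain ⟨h0s, h0α, h0β⟩ := hcond0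
  obtain ⟨h1s, h1α, h1β⟩ := hcond1
  have hdet0 : 0 < c0aa * c0bb - c0ab ^ 2 := by
    have h := mul_self_lt_mul_self (abs_nonneg c0ab) h0s
    have h2 := Real.sq_sqrt (mul_nonneg hc0aa.le hc0bb.le)
    nlinarith [sq_abs c0ab, h, h2]
  have hdet1 : 0 < c1aa * c1bb - c1ab ^ 2 := by
    have h := mul_self_lt_mul_self (abs_nonneg c1ab) h1s
    have h2 := Real.sq_sqrt (mul_nonneg hc1aa.le hc1bb.le)
    nlinarith [sq_abs c1ab, h, h2]
  have hab0α : c0ab * rα < c0aa * rβ :=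
    (lt_div_iff₀ hrα).mp (lt_of_le_of_lt (le_abs_self c0ab) h0α)
  have hab0β : c0ab * rβ < c0bb * rα :=
    (lt_div_iff₀ hrβ).mp (lt_of_le_of_lt (le_abs_self c0ab) h0β)
  have hab1α : c1ab * rα < c1aa * rβ :=
    (lt_div_iff₀ hrα).mp (lt_of_le_of_lt (le_abs_self c1ab) h1α)
  have hab1β : c1ab * rβ < c1bb * rα :=
    (lt_div_iff₀ hrβ).mp (lt_of_le_of_lt (le_abs_self c1ab) h1β)
  clear h0s h0α h0β h1s h1α h1β
  -- package all facts about the no-regulation equilibrium into scalars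
  obtain ⟨A0, A1, D0, D1, f0a, f0b, e1, e2, hθA1, hθ1A, hUGA, hUDA⟩ :
      ∃ A0 A1 D0 D1 : ℝ,
        (c0aa * A0 + c0ab * A1 = δ/2 * rα) ∧ (c0ab * A0 + c0bb * A1 = δ/2 * rβ) ∧
        (2 * (c1aa * D0 + c1ab * D1) = (1-δ) * rα) ∧
        (2 * (c1ab * D0 + c1bb * D1) = (1-δ) * rβ) ∧
        gamma0A c0aa c0ab c0bb rα rβ δ 1 = A1 ∧
        gamma1A c0aa c0ab c0bb c1aa c1ab c1bb rα rβ δ 1 = A1 + D1 ∧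
        UG c0aa c0ab c0bb rα rβ δ (gamma0A c0aa c0ab c0bb rα rβ δ)
            (gamma1A c0aa c0ab c0bb c1aa c1ab c1bb rα rβ δ)
          = δ * (rα * (A0 + D0) + rβ * (A1 + D1))
            - (c0aa * A0 ^ 2 + 2 * c0ab * A0 * A1 + c0bb * A1 ^ 2) ∧
        UD c1aa c1ab c1bb rα rβ δ (gamma0A c0aa c0ab c0bb rα rβ δ)
            (gamma1A c0aa c0ab c0bb c1aa c1ab c1bb rα rβ δ)
          = (1 - δ) * (rα * (A0 + D0) + rβ * (A1 + D1))
            - (c1aa * D0 ^ 2 + 2 * c1ab * D0 * D1 + c1bb * D1 ^ 2) := by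
    have hfoc0 : (!![c0aa,c0ab;c0ab,c0bb] : Matrix (Fin 2) (Fin 2) ℝ) *ᵥ
        gamma0A c0aa c0ab c0bb rα rβ δ = (δ/2) • ![rα,rβ] := by
      have hd : (!![c0aa,c0ab;c0ab,c0bb] : Matrix (Fin 2) (Fin 2) ℝ).det ≠ 0 := by
        rw [Matrix.det_fin_two_of]; nlinarith [hdet0]
      have hinv : (!![c0aa,c0ab;c0ab,c0bb] : Matrix (Fin 2) (Fin 2) ℝ)
          * (!![c0aa,c0ab;c0ab,c0bb] : Matrix (Fin 2) (Fin 2) ℝ)⁻¹ = 1 :=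
        Matrix.mul_nonsing_inv _ (isUnit_iff_ne_zero.mpr hd)
      unfold gamma0A
      rw [Matrix.mulVec_smul, Matrix.mulVec_mulVec, hinv, Matrix.one_mulVec]
    have hfoc1 : (!![c1aa,c1ab;c1ab,c1bb] : Matrix (Fin 2) (Fin 2) ℝ) *ᵥ
        (((1-δ)/2) • ((!![c1aa,c1ab;c1ab,c1bb] : Matrix (Fin 2) (Fin 2) ℝ)⁻¹ *ᵥ ![rα,rβ]))
        = ((1-δ)/2) • ![rα,rβ] := by
      have hd1 : (!![c1aa,c1ab;c1ab,c1bb] : Matrix (Fin 2) (Fin 2) ℝ).det ≠ 0 := by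
        rw [Matrix.det_fin_two_of]; nlinarith [hdet1]
      have hinv : (!![c1aa,c1ab;c1ab,c1bb] : Matrix (Fin 2) (Fin 2) ℝ)
          * (!![c1aa,c1ab;c1ab,c1bb] : Matrix (Fin 2) (Fin 2) ℝ)⁻¹ = 1 :=
        Matrix.mul_nonsing_inv _ (isUnit_iff_ne_zero.mpr hd1)
      rw [Matrix.mulVec_smul, Matrix.mulVec_mulVec, hinv, Matrix.one_mulVec]
    refine ⟨gamma0A c0aa c0ab c0bb rα rβ δ 0, gamma0A c0aa c0ab c0bb rα rβ δ 1,
      (((1-δ)/2) • ((!![c1aa,c1ab;c1ab,c1bb] : Matrix (Fin 2) (Fin 2) ℝ)⁻¹ *ᵥ ![rα,rβ])) 0,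
      (((1-δ)/2) • ((!![c1aa,c1ab;c1ab,c1bb] : Matrix (Fin 2) (Fin 2) ℝ)⁻¹ *ᵥ ![rα,rβ])) 1,
      ?_, ?_, ?_, ?_, rfl, ?_, ?_, ?_⟩
    · have := congrFun hfoc0 0
      simpa [Matrix.mulVec, dotProduct, Fin.sum_univ_two] using this
    · have := congrFun hfoc0 1
      simpa [Matrix.mulVec, dotProduct, Fin.sum_univ_two] using this
    · have := congrFun hfoc1 0
      simp [Matrix.mulVec, dotProduct, Fin.sum_univ_two] at this ⊢
      linarith
    · have := congrFun hfoc1 1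
      simp [Matrix.mulVec, dotProduct, Fin.sum_univ_two] at this ⊢
      linarith
    · rw [gamma1A, Pi.add_apply]
    · rw [ug_eval, gamma1A, Pi.add_apply, Pi.add_apply]
    · rw [ud_eval, gamma1A, Pi.add_apply, Pi.add_apply]; ring
  rw [hUGA, hUDA]
  clear hUGA hUDA
  have hθ1A' : ∀ ε : ℝ, gamma1A c0aa c0ab c0bb c1aa c1ab c1bb rα rβ δ 1 + 2 * ε
      = A1 + D1 + 2 * ε := fun ε => by rw [hθ1A]
  -- positivity
  have hA0pos : 0 < A0 := by
    have h : (c0aa * c0bb - c0ab ^ 2) * A0 = (δ/2) * (c0bb * rα - c0ab * rβ) := by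
      linear_combination c0bb * f0a - c0ab * f0b
    nlinarith [h, hdet0, hab0β, hδ0]
  have hD0pos : 0 < D0 := by
    have h : (c1aa * c1bb - c1ab ^ 2) * (2 * D0) = (1-δ) * (c1bb * rα - c1ab * rβ) := by
      linear_combination c1bb * e1 - c1ab * e2
    nlinarith [h, hdet1, hab1β]
  have hD1pos : 0 < D1 := by
    have h : (c1aa * c1bb - c1ab ^ 2) * (2 * D1) = (1-δ) * (c1aa * rβ - c1ab * rα) := by
      linear_combination c1aa * e2 - c1ab * e1
    nlinarith [h, hdet1, hab1α]
  -- choice of ε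
  obtain ⟨ε, hε, hεx, hε2, hε3⟩ : ∃ ε : ℝ, 0 < ε ∧
      (∀ s : ℝ, 0 ≤ s → s ≤ ε → 0 ≤ c1aa * D0 - c1ab * s) ∧
      2 * c0bb * c1aa * ε ≤ δ * (c1aa * rβ - c1ab * rα) ∧
      2 * (c1aa * c1bb - c1ab ^ 2) * c0aa * ε ≤ (1-δ) * (c0aa * rβ - c0ab * rα) * c1aa := by
    refine ⟨min (c1aa * D0 / (|c1ab| + 1))
      (min (δ * (c1aa * rβ - c1ab * rα) / (2 * c0bb * c1aa))
        ((1-δ) * (c0aa * rβ - c0ab * rα) * c1aa / (2 * (c1aa * c1bb - c1ab ^ 2) * c0aa))),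
      lt_min (div_pos (mul_pos hc1aa hD0pos) (by positivity))
        (lt_min (div_pos (mul_pos hδ0 (by linarith)) (by positivity))
          (div_pos (mul_pos (mul_pos (by linarith : (0:ℝ) < 1 - δ)
              (by linarith : (0:ℝ) < c0aa * rβ - c0ab * rα)) hc1aa)
            (by nlinarith [mul_pos hdet1 hc0aa]))), ?_, ?_, ?_⟩
    · intro s hs0 hsε
      have h1 : c1ab * s ≤ |c1ab| * s := mul_le_mul_of_nonneg_right (le_abs_self _) hs0
      have h2 : |c1ab| * s ≤ |c1ab| * (c1aa * D0 / (|c1ab| + 1)) :=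
        mul_le_mul_of_nonneg_left (le_trans hsε (min_le_left _ _)) (abs_nonneg _)
      have h3 : |c1ab| * (c1aa * D0 / (|c1ab| + 1)) ≤ c1aa * D0 := by
        rw [mul_div_assoc']
        rw [div_le_iff₀ (by positivity)]
        nlinarith [abs_nonneg c1ab, mul_pos hc1aa hD0pos]
      linarith
    · have h' := le_trans (min_le_right (c1aa * D0 / (|c1ab| + 1)) (min (δ * (c1aa * rβ - c1ab * rα) / (2 * c0bb * c1aa)) ((1-δ) * (c0aa * rβ - c0ab * rα) * c1aa / (2 * (c1aa * c1bb - c1ab ^ 2) * c0aa)))) (min_le_left (δ * (c1aa * rβ - c1ab * rα) / (2 * c0bb * c1aa)) ((1-δ) * (c0aa * rβ - c0ab * rα) * c1aa / (2 * (c1aa * c1bb - c1ab ^ 2) * c0aa)))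
      rw [le_div_iff₀ (by positivity)] at h'
      linarith
    · have h' := le_trans (min_le_right (c1aa * D0 / (|c1ab| + 1)) (min (δ * (c1aa * rβ - c1ab * rα) / (2 * c0bb * c1aa)) ((1-δ) * (c0aa * rβ - c0ab * rα) * c1aa / (2 * (c1aa * c1bb - c1ab ^ 2) * c0aa)))) (min_le_right (δ * (c1aa * rβ - c1ab * rα) / (2 * c0bb * c1aa)) ((1-δ) * (c0aa * rβ - c0ab * rα) * c1aa / (2 * (c1aa * c1bb - c1ab ^ 2) * c0aa)))
      rw [le_div_iff₀ (by positivity)] at h'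
      linarith
  refine ⟨ε, hε, ?_⟩
  intro b γ0s hSPE
  obtain ⟨hb, hγs0, hγs1, hopt⟩ := hSPE
  rw [hθA1] at hγs1 hopt
  rw [hθ1A' ε] at hb
  clear hθA1 hθ1A hθ1A'
  -- Part (a): lower bound for the generalist via candidate γc = (A0, A1 + ε)
  obtain ⟨xc, hxc⟩ : ∃ t, c1aa * t = c1aa * D0 - c1ab * ε :=
    ⟨(c1aa * D0 - c1ab * ε) / c1aa, by field_simp⟩
  have hxc0 : 0 ≤ xc := by nlinarith [hεx ε hε.le le_rfl, hxc, hc1aa]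
  have hbc := br_eq c1aa c1ab c1bb rα rβ δ hc1aa hdet1 D0 D1 e1 e2
    ![A0, A1 + ε] (A1 + D1 + 2 * ε) ε xc hε.le hxc hxc0
    (by linarith [hD1pos]) (Or.inr (by simp; ring)) (by simp; linarith)
    b (hb ![A0, A1 + ε]).1 (hb ![A0, A1 + ε]).2
  simp only [Matrix.cons_val_zero, Matrix.cons_val_one, Matrix.head_cons] at hbc
  have hUGc : UG c0aa c0ab c0bb rα rβ δ ![A0, A1 + ε] (b ![A0, A1 + ε])
      = δ * (rα * (A0 + xc) + rβ * (A1 + ε + D1 + ε))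
        - (c0aa * A0 ^ 2 + 2 * c0ab * A0 * (A1 + ε) + c0bb * (A1 + ε) ^ 2) := by
    rw [ug_eval, hbc]
    simp only [Matrix.cons_val_zero, Matrix.cons_val_one, Matrix.head_cons]
  have hparta : δ * (rα * (A0 + D0) + rβ * (A1 + D1))
        - (c0aa * A0 ^ 2 + 2 * c0ab * A0 * A1 + c0bb * A1 ^ 2)
      < UG c0aa c0ab c0bb rα rβ δ γ0s (b γ0s) := by
    refine lt_of_lt_of_le ?_ (hopt ![A0, A1 + ε] (by simp [hA0pos.le]) (by simp))
    rw [hUGc]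
    have hkey : c1aa * ((δ * (rα * (A0 + xc) + rβ * (A1 + ε + D1 + ε))
          - (c0aa * A0 ^ 2 + 2 * c0ab * A0 * (A1 + ε) + c0bb * (A1 + ε) ^ 2))
        - (δ * (rα * (A0 + D0) + rβ * (A1 + D1))
          - (c0aa * A0 ^ 2 + 2 * c0ab * A0 * A1 + c0bb * A1 ^ 2)))
        = ε * δ * (c1aa * rβ - c1ab * rα) - c0bb * ε ^ 2 * c1aa := by
      linear_combination (δ * rα) * hxc - 2 * c1aa * ε * f0b
    nlinarith [hkey, hε2, hε, hc1aa, mul_pos hε (mul_pos hδ0 (by nlinarith : (0:ℝ) < c1aa * rβ - c1ab * rα))]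
  refine ⟨hparta, ?_⟩
  -- Part (b): the specialist's utility at the SPE
  obtain ⟨s, x, hs0, hsε, hx, hkkt, hθle, hbs⟩ : ∃ s x, 0 ≤ s ∧ s ≤ ε ∧
      c1aa * x = c1aa * D0 - c1ab * s ∧
      (s = 0 ∨ A1 + D1 + 2 * ε = γ0s 1 + D1 + s) ∧
      A1 + D1 + 2 * ε ≤ γ0s 1 + D1 + s ∧
      b γ0s = ![γ0s 0 + x, γ0s 1 + D1 + s] := by
    rcases le_or_gt (A1 + D1 + 2 * ε) (γ0s 1 + D1) with hc | hc
    · refine ⟨0, D0, le_rfl, hε.le, by ring, Or.inl rfl, by linarith, ?_⟩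
      exact br_eq c1aa c1ab c1bb rα rβ δ hc1aa hdet1 D0 D1 e1 e2 γ0s (A1 + D1 + 2 * ε)
        0 D0 le_rfl (by ring) hD0pos.le (by linarith [hD1pos]) (Or.inl rfl) (by linarith)
        b (hb γ0s).1 (hb γ0s).2
    · refine ⟨A1 + 2 * ε - γ0s 1, (c1aa * D0 - c1ab * (A1 + 2 * ε - γ0s 1)) / c1aa,
        by linarith, by linarith, by field_simp, Or.inr (by ring), by linarith, ?_⟩
      have hs0' : (0:ℝ) ≤ A1 + 2 * ε - γ0s 1 := by linarith
      have hsε' : A1 + 2 * ε - γ0s 1 ≤ ε := by linarith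
      have hx' : c1aa * ((c1aa * D0 - c1ab * (A1 + 2 * ε - γ0s 1)) / c1aa)
          = c1aa * D0 - c1ab * (A1 + 2 * ε - γ0s 1) := by field_simp
      have hx0' : 0 ≤ (c1aa * D0 - c1ab * (A1 + 2 * ε - γ0s 1)) / c1aa :=
        div_nonneg (hεx _ hs0' hsε') hc1aa.le
      exact br_eq c1aa c1ab c1bb rα rβ δ hc1aa hdet1 D0 D1 e1 e2 γ0s (A1 + D1 + 2 * ε)
        _ _ hs0' hx' hx0' (by linarith [hD1pos]) (Or.inr (by ring)) (by linarith)
        b (hb γ0s).1 (hb γ0s).2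
  -- generalist's first-order condition in α at γ0s
  have hαs : δ * rα ≤ 2 * (c0aa * γ0s 0 + c0ab * γ0s 1) := by
    by_contra hcon
    push_neg at hcon
    obtain ⟨t, ht⟩ : ∃ t, 2 * c0aa * t = δ * rα - 2 * c0ab * γ0s 1 :=
      ⟨(δ * rα - 2 * c0ab * γ0s 1) / (2 * c0aa), by field_simp⟩
    have htgt : γ0s 0 < t := by nlinarith [hcon, ht, hc0aa]
    have ht0 : 0 ≤ t := le_trans hγs0 htgt.le
    have hb' := br_eq c1aa c1ab c1bb rα rβ δ hc1aa hdet1 D0 D1 e1 e2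
      ![t, γ0s 1] (A1 + D1 + 2 * ε) s x hs0 hx
      (by nlinarith [hεx s hs0 hsε, hx, hc1aa]) (by linarith [hD1pos])
      (by rcases hkkt with h | h
          · exact Or.inl h
          · exact Or.inr (by simpa using h))
      (by simpa using hθle)
      b (hb ![t, γ0s 1]).1 (hb ![t, γ0s 1]).2
    simp only [Matrix.cons_val_zero, Matrix.cons_val_one, Matrix.head_cons] at hb'
    have hcomp := hopt ![t, γ0s 1] (by simpa using ht0) (by simpa using hγs1)
    rw [ug_eval, ug_eval, hb', hbs] at hcomp
    simp only [Matrix.cons_val_zero, Matrix.cons_val_one, Matrix.head_cons] at hcomp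
    nlinarith [hcomp, ht, htgt, hc0aa,
      mul_pos hc0aa (mul_pos (sub_pos.mpr htgt) (sub_pos.mpr htgt))]
  -- final inequality for the specialist
  rw [ud_eval, hbs]
  simp only [Matrix.cons_val_zero, Matrix.cons_val_one, Matrix.head_cons]
  have hkey2 : c1aa * (((1 - δ) * (rα * (γ0s 0 + x) + rβ * (γ0s 1 + D1 + s))
        - (c1aa * (γ0s 0 + x - γ0s 0) ^ 2
            + 2 * c1ab * (γ0s 0 + x - γ0s 0) * (γ0s 1 + D1 + s - γ0s 1)
            + c1bb * (γ0s 1 + D1 + s - γ0s 1) ^ 2))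
      - ((1 - δ) * (rα * (A0 + D0) + rβ * (A1 + D1))
        - (c1aa * D0 ^ 2 + 2 * c1ab * D0 * D1 + c1bb * D1 ^ 2)))
      = c1aa * (1 - δ) * (rα * (γ0s 0 - A0) + rβ * (γ0s 1 - A1))
        - s ^ 2 * (c1aa * c1bb - c1ab ^ 2) := by
    linear_combination (-(c1aa * (x - D0))) * e1 + (-(c1aa * s)) * e2
      + (-(c1aa * x - c1aa * D0 + c1ab * s)) * hx
  have hΔα : 0 ≤ c0aa * (γ0s 0 - A0) + c0ab * (γ0s 1 - A1) := by linarith [hαs, f0a]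
  have hΔ : ε ≤ γ0s 1 - A1 := by linarith [hγs1]
  have hP0 : 0 ≤ c0aa * rβ - c0ab * rα := by linarith [hab0α]
  have hstep : ε * (c0aa * rβ - c0ab * rα)
      ≤ c0aa * (rα * (γ0s 0 - A0) + rβ * (γ0s 1 - A1)) := by
    linarith only [mul_nonneg hrα.le hΔα,
      mul_nonneg (by linarith only [hΔ] : (0:ℝ) ≤ γ0s 1 - A1 - ε) hP0]
  have hLpos : (0:ℝ) ≤ c1aa * (1 - δ) := mul_nonneg hc1aa.le (by linarith only [hδ1])
  refine cancel_pos_factor _ _ _ hc1aa ?_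
  rw [hkey2]
  refine pos_cancel c0aa _ hc0aa ?_
  linarith only [mul_le_mul_of_nonneg_left hstep hLpos,
    mul_le_mul_of_nonneg_left (mul_self_le_mul_self hs0 hsε) (mul_pos hc0aa hdet1).le,
    mul_le_mul_of_nonneg_right hε3 hε.le,
    mul_pos (mul_pos hc0aa hdet1) (mul_pos hε hε)]
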